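/- Let a > 0 and τ > 0. On a probability space (Ω, P), let X(0) be a real random variable, and for each n ∈ ℕ let Ŷ_n be a real random variable such that for every ε > 0, P(|e^{a n τ} X(0) − Ŷ_n| > ε) → 0 as n → ∞. For t ≥ 0 define the estimate X̂(t) := e^{a(t − ⌊t/τ⌋·τ)} Ŷ_{⌊t/τ⌋}. Then for every ε > 0, P(|e^{a t} X(0) − X̂(t)| > ε) → 0 as t → ∞ (limit along real t). -/

import Mathlib

open MeasureTheory ProbabilityTheory Filter Set

/-- Lemma 2: if the open-loop state `e^{a n τ} X(0)` can be estimated at the equally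
spaced times `t_n = nτ` with error tending to zero in probability, then the estimate
propagated through the open-loop dynamics, `X̂(t) = e^{a(t - ⌊t/τ⌋τ)} Ŷ_{⌊t/τ⌋}`,
has error tending to zero in probability as `t → ∞` along the reals. -/
theorem estimation_along_sequence_implies_all_times
    {Ω : Type*} [MeasurableSpace Ω] (P : Measure Ω) [IsProbabilityMeasure P]
    (a τ : ℝ) (ha : 0 < a) (hτ : 0 < τ)
    (X0 : Ω → ℝ) (Yhat : ℕ → Ω → ℝ)
    (hconv : ∀ ε > 0, Tendsto
      (fun n : ℕ => P {ω | ε < |Real.exp (a * (n * τ)) * X0 ω - Yhat n ω|})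
      atTop (nhds 0)) :
    ∀ ε > 0, Tendsto (fun t : ℝ =>
      P {ω | ε < |Real.exp (a * t) * X0 ω -
        Real.exp (a * (t - (⌊t / τ⌋.toNat : ℝ) * τ)) * Yhat ⌊t / τ⌋.toNat ω|})
      atTop (nhds 0) := by
  intro ε hε
  set ε' : ℝ := ε * Real.exp (-(a * τ)) with hε'def
  have hε' : 0 < ε' := mul_pos hε (Real.exp_pos _)
  set g : ℕ → ENNReal := fun n => P {ω | ε' < |Real.exp (a * (n * τ)) * X0 ω - Yhat n ω|}
  have hg : Tendsto g atTop (nhds 0) := hconv ε' hε'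
  -- ⌊t/τ⌋.toNat → ∞
  have hfloor : Tendsto (fun t : ℝ => ⌊t / τ⌋.toNat) atTop atTop := by
    rw [tendsto_atTop_atTop]
    intro b
    refine ⟨(b : ℝ) * τ, fun t htb => ?_⟩
    have h1 : (b : ℝ) ≤ t / τ := (le_div_iff₀ hτ).mpr htb
    have h2 : (b : ℤ) ≤ ⌊t / τ⌋ := Int.le_floor.mpr (by exact_mod_cast h1)
    omega
  have hcomp : Tendsto (fun t : ℝ => g ⌊t / τ⌋.toNat) atTop (nhds 0) :=
    hg.comp hfloor
  refine tendsto_of_tendsto_of_tendsto_of_le_of_le' tendsto_const_nhds hcomp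
    (Eventually.of_forall fun t => zero_le) ?_
  filter_upwards [eventually_ge_atTop (0 : ℝ)] with t ht
  apply measure_mono
  intro ω hω
  simp only [mem_setOf_eq] at hω ⊢
  set n : ℕ := ⌊t / τ⌋.toNat with hn
  have hnn : (0 : ℤ) ≤ ⌊t / τ⌋ := Int.floor_nonneg.mpr (div_nonneg ht hτ.le)
  have hcast : ((n : ℕ) : ℝ) = ((⌊t / τ⌋ : ℤ) : ℝ) := by
    rw [hn]; exact_mod_cast congrArg (Int.cast : ℤ → ℝ) (Int.toNat_of_nonneg hnn)
  have hnt : (n : ℝ) * τ ≤ t := by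
    have h1 : (n : ℝ) ≤ t / τ := by rw [hcast]; exact Int.floor_le (t / τ)
    calc (n : ℝ) * τ ≤ (t / τ) * τ := by nlinarith
    _ = t := div_mul_cancel₀ t hτ.ne'
  have hlt : t < ((n : ℝ) + 1) * τ := by
    have h1 : t / τ < (n : ℝ) + 1 := by
      rw [hcast]; exact Int.lt_floor_add_one (t / τ)
    calc t = (t / τ) * τ := (div_mul_cancel₀ t hτ.ne').symm
    _ < ((n : ℝ) + 1) * τ := by nlinarith
  set s : ℝ := t - (n : ℝ) * τ with hs
  have hs0 : 0 ≤ s := by linarith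
  have hsτ : s ≤ τ := by nlinarith
  have hfact : Real.exp (a * t) * X0 ω -
      Real.exp (a * (t - (n : ℝ) * τ)) * Yhat n ω =
      Real.exp (a * s) * (Real.exp (a * ((n : ℝ) * τ)) * X0 ω - Yhat n ω) := by
    have h1 : a * t = a * s + a * ((n : ℝ) * τ) := by rw [hs]; ring
    have h2 : a * (t - (n : ℝ) * τ) = a * s := by rw [hs]
    rw [h1, h2, Real.exp_add]; ring
  rw [hfact, abs_mul, Real.abs_exp] at hω
  have hexp : Real.exp (a * s) ≤ Real.exp (a * τ) :=
    Real.exp_le_exp.mpr (by nlinarith)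
  have hd : 0 ≤ |Real.exp (a * ((n : ℝ) * τ)) * X0 ω - Yhat n ω| := abs_nonneg _
  have : ε < Real.exp (a * τ) * |Real.exp (a * ((n : ℝ) * τ)) * X0 ω - Yhat n ω| :=
    lt_of_lt_of_le hω (mul_le_mul_of_nonneg_right hexp hd)
  have := (div_lt_iff₀' (Real.exp_pos (a * τ))).mpr this
  calc ε' = ε / Real.exp (a * τ) := by
        rw [hε'def, Real.exp_neg]; ring
    _ < _ := this
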